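/- Let H be a finite simple graph with vertex set {1,…,N} and let C be a set of l ≥ 1 distinct edges of H. Then cost(C) = l − 1 if and only if C is an l-star or C is a triangle. -/

import Mathlib

open SimpleGraph Finset

/-- For a graph on vertex set `Fin N`, the edge `e = {i, j}` is identified with the
point `x_e = b_i + b_j` in `ℝ^N`, where `b_i` is the `i`-th standard basis vector. -/
noncomputable def edgePoint (N : ℕ) (e : Sym2 (Fin N)) : EuclideanSpace ℝ (Fin N) :=
  Sym2.lift ⟨fun i j => EuclideanSpace.single i (1 : ℝ) + EuclideanSpace.single j (1 : ℝ),
    fun _ _ => add_comm _ _⟩ e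

/-- The (k-means) cost of a finite set `C` of edges:
`cost(C) = inf_{c ∈ ℝ^N} Σ_{e ∈ C} ‖x_e − c‖²`. -/
noncomputable def cost (N : ℕ) (C : Finset (Sym2 (Fin N))) : ℝ :=
  ⨅ c : EuclideanSpace ℝ (Fin N), ∑ e ∈ C, ‖edgePoint N e - c‖ ^ 2

/-- A star is a set of distinct edges all incident to a common vertex. -/
def IsStar {N : ℕ} (C : Finset (Sym2 (Fin N))) : Prop :=
  ∃ v : Fin N, ∀ e ∈ C, v ∈ e

/-- A triangle is the set of the three edges `{u,v}, {v,w}, {u,w}` on three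
distinct vertices `u, v, w`. -/
def IsTriangle {N : ℕ} (C : Finset (Sym2 (Fin N))) : Prop :=
  ∃ u v w : Fin N, u ≠ v ∧ u ≠ w ∧ v ≠ w ∧ C = {s(u, v), s(v, w), s(u, w)}

/-! ### Auxiliary material -/

section Aux

variable {N : ℕ}

lemma edgePoint_mk' (i j : Fin N) :
    edgePoint N s(i,j) = EuclideanSpace.single i (1:ℝ) + EuclideanSpace.single j 1 := rfl

lemma sym2_rep' (e : Sym2 (Fin N)) : ∃ a b, e = s(a, b) := by
  induction e using Sym2.ind with
  | _ i j => exact ⟨i, j, rfl⟩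

lemma edgePoint_apply' (e : Sym2 (Fin N)) (he : ¬ e.IsDiag) (v : Fin N) :
    edgePoint N e v = if v ∈ e then 1 else 0 := by
  induction e using Sym2.ind with
  | _ i j =>
    rw [Sym2.mk_isDiag_iff] at he
    simp only [edgePoint_mk', PiLp.add_apply, EuclideanSpace.single_apply, Sym2.mem_iff]
    by_cases h1 : v = i <;> by_cases h2 : v = j <;> simp_all

lemma norm_sq_edgePoint' (e : Sym2 (Fin N)) (he : ¬ e.IsDiag) :
    ‖edgePoint N e‖ ^ 2 = 2 := by
  induction e using Sym2.ind with
  | _ i j =>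
    rw [Sym2.mk_isDiag_iff] at he
    rw [← real_inner_self_eq_norm_sq, edgePoint_mk']
    simp [inner_add_add_self, real_inner_self_eq_norm_sq, EuclideanSpace.inner_single_left,
      EuclideanSpace.single_apply, EuclideanSpace.norm_single, he]
    rw [← real_inner_self_eq_norm_sq, inner_add_add_self]
    simp [EuclideanSpace.inner_single_left, EuclideanSpace.single_apply, he, Ne.symm he]
    norm_num

lemma sum_edgePoint_apply' (C : Finset (Sym2 (Fin N))) (hd : ∀ e ∈ C, ¬ e.IsDiag) (v : Fin N) :
    (∑ e ∈ C, edgePoint N e) v = ((C.filter (fun e => v ∈ e)).card : ℝ) := by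
  rw [WithLp.ofLp_sum, Finset.sum_apply, ← Finset.sum_boole]
  exact Finset.sum_congr rfl fun e he => edgePoint_apply' e (hd e he) v

lemma cost_eq' (C : Finset (Sym2 (Fin N))) (hd : ∀ e ∈ C, ¬ e.IsDiag) (l : ℕ)
    (hl : C.card = l) (hl1 : 1 ≤ l) :
    cost N C = 2 * l - ‖∑ e ∈ C, edgePoint N e‖ ^ 2 / l := by
  set S := ∑ e ∈ C, edgePoint N e with hS
  have hlpos : (0:ℝ) < l := by exact_mod_cast hl1
  have hlne : (l:ℝ) ≠ 0 := ne_of_gt hlpos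
  have key : ∀ c : EuclideanSpace ℝ (Fin N),
      ∑ e ∈ C, ‖edgePoint N e - c‖ ^ 2
        = 2*l - ‖S‖^2/l + l * ‖c - (l:ℝ)⁻¹ • S‖^2 := by
    intro c
    have expand : ∑ e ∈ C, ‖edgePoint N e - c‖ ^ 2
        = 2*l - 2 * inner ℝ S c + l * ‖c‖^2 := by
      have : ∀ e ∈ C, ‖edgePoint N e - c‖ ^ 2
          = ‖edgePoint N e‖^2 - 2 * inner ℝ (edgePoint N e) c + ‖c‖^2 := fun e he =>
        norm_sub_sq_real _ _
      have h2 : ∑ e ∈ C, ‖edgePoint N e‖ ^ 2 = 2 * l := by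
        rw [Finset.sum_congr rfl (fun e he => norm_sq_edgePoint' e (hd e he))]
        simp [hl]; ring
      rw [Finset.sum_congr rfl this, Finset.sum_add_distrib, Finset.sum_sub_distrib, h2,
        ← Finset.mul_sum, ← sum_inner, Finset.sum_const, hl, nsmul_eq_mul]
    rw [expand]
    have h3 : ‖c - (l:ℝ)⁻¹ • S‖ ^ 2
        = ‖c‖^2 - 2 * ((l:ℝ)⁻¹ * inner ℝ c S) + ((l:ℝ)⁻¹)^2 * ‖S‖^2 := by
      rw [norm_sub_sq_real, real_inner_smul_right, norm_smul]
      simp [abs_of_nonneg (le_of_lt (inv_pos.2 hlpos)), mul_pow]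
    rw [h3, real_inner_comm S c]
    field_simp
    ring
  have hb : BddBelow (Set.range fun c : EuclideanSpace ℝ (Fin N) =>
      ∑ e ∈ C, ‖edgePoint N e - c‖ ^ 2) := by
    refine ⟨0, ?_⟩
    rintro x ⟨c, rfl⟩
    exact Finset.sum_nonneg fun e _ => sq_nonneg _
  refine le_antisymm ?_ ?_
  · have := ciInf_le hb ((l:ℝ)⁻¹ • S)
    rw [key] at this
    simp at this
    exact this
  · refine le_ciInf fun c => ?_
    rw [key c]
    nlinarith [sq_nonneg ‖c - (l:ℝ)⁻¹ • S‖, hlpos]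

noncomputable def pairN (e e' : Sym2 (Fin N)) : ℕ :=
  (Finset.univ.filter fun v => v ∈ e ∧ v ∈ e').card

lemma pairN_self (e : Sym2 (Fin N)) (he : ¬ e.IsDiag) : pairN e e = 2 := by
  obtain ⟨i, j, rfl⟩ := sym2_rep' e
  rw [Sym2.mk_isDiag_iff] at he
  have : (Finset.univ.filter fun v => v ∈ s(i,j) ∧ v ∈ s(i,j)) = {i, j} := by
    ext v; simp [Sym2.mem_iff]
  rw [pairN, this, Finset.card_insert_of_notMem (by simp [he]), Finset.card_singleton]

lemma pairN_le_one (e e' : Sym2 (Fin N)) (hne : e ≠ e') : pairN e e' ≤ 1 := by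
  rw [pairN, Finset.card_le_one]
  intro a ha b hb
  simp only [Finset.mem_filter] at ha hb
  by_contra hab
  exact hne (((Sym2.mem_and_mem_iff hab).1 ⟨ha.2.1, hb.2.1⟩).trans
    ((Sym2.mem_and_mem_iff hab).1 ⟨ha.2.2, hb.2.2⟩).symm)

lemma pairN_pos_iff (e e' : Sym2 (Fin N)) : 1 ≤ pairN e e' ↔ ∃ v, v ∈ e ∧ v ∈ e' := by
  rw [pairN, Nat.one_le_iff_ne_zero, ← Nat.pos_iff_ne_zero, Finset.card_pos,
    Finset.filter_nonempty_iff]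
  simp

lemma sum_deg_sq (C : Finset (Sym2 (Fin N))) :
    ∑ v : Fin N, ((C.filter (fun e => v ∈ e)).card)^2
      = ∑ e ∈ C, ∑ e' ∈ C, pairN e e' := by
  have h1 : ∀ v : Fin N, ((C.filter (fun e => v ∈ e)).card)^2
      = ∑ e ∈ C, ∑ e' ∈ C, (if v ∈ e ∧ v ∈ e' then 1 else 0) := by
    intro v
    rw [Finset.card_filter, sq, Finset.sum_mul_sum]
    refine Finset.sum_congr rfl fun e _ => Finset.sum_congr rfl fun e' _ => ?_
    by_cases h : v ∈ e <;> by_cases h' : v ∈ e' <;> simp [h, h']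
  rw [Finset.sum_congr rfl fun v _ => h1 v]
  rw [Finset.sum_comm]
  refine Finset.sum_congr rfl fun e _ => ?_
  rw [Finset.sum_comm]
  refine Finset.sum_congr rfl fun e' _ => ?_
  rw [pairN, Finset.card_filter]

lemma norm_sq_sum' (C : Finset (Sym2 (Fin N))) (hd : ∀ e ∈ C, ¬ e.IsDiag) :
    ‖∑ e ∈ C, edgePoint N e‖ ^ 2
      = ((∑ v : Fin N, ((C.filter (fun e => v ∈ e)).card)^2 : ℕ) : ℝ) := by
  rw [← real_inner_self_eq_norm_sq, PiLp.inner_apply]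
  push_cast
  refine Finset.sum_congr rfl fun v _ => ?_
  rw [sum_edgePoint_apply' C hd v]
  simp [RCLike.inner_apply, sq]

lemma row_le (C : Finset (Sym2 (Fin N))) (hd : ∀ e ∈ C, ¬ e.IsDiag) (l : ℕ) (hl : C.card = l)
    (e : Sym2 (Fin N)) (he : e ∈ C) : ∑ e' ∈ C, pairN e e' ≤ l + 1 := by
  have hl1 : 1 ≤ l := hl ▸ Finset.card_pos.2 ⟨e, he⟩
  rw [← Finset.add_sum_erase _ _ he, pairN_self e (hd e he)]
  have : ∑ e' ∈ C.erase e, pairN e e' ≤ l - 1 := by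
    calc ∑ e' ∈ C.erase e, pairN e e' ≤ ∑ _e' ∈ C.erase e, 1 :=
      Finset.sum_le_sum fun e' he' => pairN_le_one e e' (Finset.ne_of_mem_erase he').symm
    _ = l - 1 := by rw [Finset.sum_const, smul_eq_mul, mul_one, Finset.card_erase_of_mem he, hl]
  omega

lemma T_eq_iff (C : Finset (Sym2 (Fin N))) (hd : ∀ e ∈ C, ¬ e.IsDiag) (l : ℕ)
    (hl : C.card = l) :
    ∑ e ∈ C, ∑ e' ∈ C, pairN e e' = l * (l + 1) ↔
      ∀ e ∈ C, ∀ e' ∈ C, ∃ v, v ∈ e ∧ v ∈ e' := by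
  constructor
  · intro hT e he e' he'
    by_contra hz
    have hz0 : pairN e e' = 0 := by
      have := mt (pairN_pos_iff e e').1 hz; omega
    have hne : e ≠ e' := by
      rintro rfl
      rw [pairN_self e (hd e he)] at hz0; omega
    have hl2 : 2 ≤ l := hl ▸ Finset.one_lt_card.2 ⟨e, he, e', he', hne⟩
    have hrow : ∑ f' ∈ C, pairN e f' ≤ l := by
      have hee' : e ∈ C.erase e' := Finset.mem_erase.2 ⟨hne, he⟩
      rw [← Finset.add_sum_erase _ _ he', hz0, zero_add,
        ← Finset.add_sum_erase _ _ hee', pairN_self e (hd e he)]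
      have : ∑ f' ∈ (C.erase e').erase e, pairN e f' ≤ l - 2 := by
        calc ∑ f' ∈ (C.erase e').erase e, pairN e f'
            ≤ ∑ _f' ∈ (C.erase e').erase e, 1 :=
          Finset.sum_le_sum fun f' hf' => pairN_le_one e f' (Finset.ne_of_mem_erase hf').symm
        _ = l - 2 := by
          rw [Finset.sum_const, smul_eq_mul, mul_one, Finset.card_erase_of_mem hee',
            Finset.card_erase_of_mem he', hl]
          omega
      omega
    have hstrict : ∑ f ∈ C, ∑ f' ∈ C, pairN f f' < ∑ _f ∈ C, (l + 1) :=
      Finset.sum_lt_sum (fun f hf => row_le C hd l hl f hf) ⟨e, he, by omega⟩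
    rw [Finset.sum_const, smul_eq_mul, hl, hT] at hstrict
    omega
  · intro hP
    have h1 : ∀ e ∈ C, ∑ e' ∈ C, pairN e e' = l + 1 := by
      intro e he
      have hl1 : 1 ≤ l := hl ▸ Finset.card_pos.2 ⟨e, he⟩
      rw [← Finset.add_sum_erase _ _ he, pairN_self e (hd e he)]
      have : ∀ e' ∈ C.erase e, pairN e e' = 1 := fun e' he' =>
        le_antisymm (pairN_le_one e e' (Finset.ne_of_mem_erase he').symm)
          ((pairN_pos_iff e e').2 (hP e he e' (Finset.mem_of_mem_erase he')))
      rw [Finset.sum_congr rfl this, Finset.sum_const, smul_eq_mul, mul_one,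
        Finset.card_erase_of_mem he, hl]
      omega
    rw [Finset.sum_congr rfl h1, Finset.sum_const, smul_eq_mul, hl]

set_option maxHeartbeats 2000000 in
lemma classify (C : Finset (Sym2 (Fin N))) (hd : ∀ e ∈ C, ¬ e.IsDiag) (hne : C.Nonempty)
    (hP : ∀ e ∈ C, ∀ e' ∈ C, ∃ v, v ∈ e ∧ v ∈ e') : IsStar C ∨ IsTriangle C := by
  by_cases hstar : ∃ v : Fin N, ∀ e ∈ C, v ∈ e
  · exact Or.inl hstar
  right
  push_neg at hstar
  obtain ⟨e1, he1⟩ := hne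
  obtain ⟨a, b, rfl⟩ := sym2_rep' e1
  have hab : a ≠ b := fun h => (hd _ he1) (Sym2.mk_isDiag_iff.2 h)
  obtain ⟨e2, he2, ha2⟩ := hstar a
  have hb2 : b ∈ e2 := by
    obtain ⟨v, hv1, hv2⟩ := hP _ he1 _ he2
    rcases Sym2.mem_iff.1 hv1 with rfl | rfl
    · exact absurd hv2 ha2
    · exact hv2
  obtain ⟨c, rfl⟩ := Sym2.mem_iff_exists.1 hb2
  have hbc : b ≠ c := fun h => (hd _ he2) (Sym2.mk_isDiag_iff.2 h)
  have hac : a ≠ c := fun h => ha2 (by rw [h]; simp)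
  obtain ⟨e3, he3, hb3⟩ := hstar b
  have ha3 : a ∈ e3 := by
    obtain ⟨v, hv1, hv2⟩ := hP _ he1 _ he3
    rcases Sym2.mem_iff.1 hv1 with rfl | rfl
    · exact hv2
    · exact absurd hv2 hb3
  have hc3 : c ∈ e3 := by
    obtain ⟨v, hv1, hv2⟩ := hP _ he2 _ he3
    rcases Sym2.mem_iff.1 hv1 with rfl | rfl
    · exact absurd hv2 hb3
    · exact hv2
  have he3eq : e3 = s(a, c) := (Sym2.mem_and_mem_iff hac).1 ⟨ha3, hc3⟩
  refine ⟨a, b, c, hab, hac, hbc, ?_⟩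
  apply Finset.Subset.antisymm
  · intro e4 he4
    obtain ⟨x, y, rfl⟩ := sym2_rep' e4
    have hxy : x ≠ y := fun h => (hd _ he4) (Sym2.mk_isDiag_iff.2 h)
    obtain ⟨v1, hv1, hv1'⟩ := hP _ he4 _ he1
    obtain ⟨v2, hv2, hv2'⟩ := hP _ he4 _ he2
    obtain ⟨v3, hv3, hv3'⟩ := hP _ he4 _ (he3eq ▸ he3)
    simp only [Sym2.mem_iff] at hv1 hv1' hv2 hv2' hv3 hv3'
    have hx : x = a ∨ x = b ∨ x = c := by
      by_contra hx
      push_neg at hx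
      obtain ⟨hxa, hxb, hxc⟩ := hx
      have hy1 : y = a ∨ y = b := by
        rcases hv1 with rfl | rfl
        · exact absurd hv1' (by tauto)
        · exact hv1'
      have hy2 : y = b ∨ y = c := by
        rcases hv2 with rfl | rfl
        · exact absurd hv2' (by tauto)
        · exact hv2'
      have hy3 : y = a ∨ y = c := by
        rcases hv3 with rfl | rfl
        · exact absurd hv3' (by tauto)
        · exact hv3'
      rcases hy1 with rfl | rfl
      · exact hy2.elim hab hac
      · exact hy3.elim (fun h => hab h.symm) hbc
    have hy : y = a ∨ y = b ∨ y = c := by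
      by_contra hy
      push_neg at hy
      obtain ⟨hya, hyb, hyc⟩ := hy
      have hx1 : x = a ∨ x = b := by
        rcases hv1 with rfl | rfl
        · exact hv1'
        · exact absurd hv1' (by tauto)
      have hx2 : x = b ∨ x = c := by
        rcases hv2 with rfl | rfl
        · exact hv2'
        · exact absurd hv2' (by tauto)
      have hx3 : x = a ∨ x = c := by
        rcases hv3 with rfl | rfl
        · exact hv3'
        · exact absurd hv3' (by tauto)
      rcases hx1 with rfl | rfl
      · exact hx2.elim hab hac
      · exact hx3.elim (fun h => hab h.symm) hbc
    clear hv1 hv1' hv2 hv2' hv3 hv3' hP hstar hd he1 he2 he3 he4 hb2 ha2 hb3 ha3 hc3 he3eq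
    simp only [Finset.mem_insert, Finset.mem_singleton, Sym2.eq_iff]
    rcases hx with rfl | rfl | rfl <;> rcases hy with rfl | rfl | rfl <;> tauto
  · intro e he
    simp only [Finset.mem_insert, Finset.mem_singleton] at he
    rcases he with rfl | rfl | rfl
    · exact he1
    · exact he2
    · exact he3eq ▸ he3

lemma triangle_pairwise (C : Finset (Sym2 (Fin N))) (h : IsTriangle C) :
    ∀ e ∈ C, ∀ e' ∈ C, ∃ v, v ∈ e ∧ v ∈ e' := by
  obtain ⟨u, v, w, _, _, _, rfl⟩ := h
  intro e he e' he'
  simp only [Finset.mem_insert, Finset.mem_singleton] at he he'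
  rcases he with rfl | rfl | rfl <;> rcases he' with rfl | rfl | rfl
  · exact ⟨u, by simp, by simp⟩
  · exact ⟨v, by simp, by simp⟩
  · exact ⟨u, by simp, by simp⟩
  · exact ⟨v, by simp, by simp⟩
  · exact ⟨v, by simp, by simp⟩
  · exact ⟨w, by simp, by simp⟩
  · exact ⟨u, by simp, by simp⟩
  · exact ⟨w, by simp, by simp⟩
  · exact ⟨u, by simp, by simp⟩

lemma star_pairwise (C : Finset (Sym2 (Fin N))) (h : IsStar C) :
    ∀ e ∈ C, ∀ e' ∈ C, ∃ v, v ∈ e ∧ v ∈ e' := by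
  obtain ⟨v, hv⟩ := h
  exact fun e he e' he' => ⟨v, hv e he, hv e' he'⟩

end Aux

/-- For a set `C` of `l ≥ 1` distinct edges of a finite simple graph `H`
on vertex set `{1, …, N}`, `cost(C) = l − 1` if and only if `C` is an `l`-star or a
triangle. -/
theorem statement7 {N : ℕ} (H : SimpleGraph (Fin N)) (C : Finset (Sym2 (Fin N)))
    (hC : ↑C ⊆ H.edgeSet) (l : ℕ) (hl : C.card = l) (hl1 : 1 ≤ l) :
    cost N C = (l : ℝ) - 1 ↔ (IsStar C ∨ IsTriangle C) := by
  have hd : ∀ e ∈ C, ¬ e.IsDiag := fun e he => H.not_isDiag_of_mem_edgeSet (hC he)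
  have hlpos : (0:ℝ) < l := by exact_mod_cast hl1
  have hlne : (l:ℝ) ≠ 0 := ne_of_gt hlpos
  set T : ℕ := ∑ e ∈ C, ∑ e' ∈ C, pairN e e' with hT
  have hcost : cost N C = 2 * l - (T : ℝ) / l := by
    rw [cost_eq' C hd l hl hl1, norm_sq_sum' C hd, sum_deg_sq]
  have harith : (cost N C = (l:ℝ) - 1) ↔ ((T:ℝ) = l * (l + 1)) := by
    rw [hcost]
    constructor <;> intro h
    · field_simp at h
      linarith
    · rw [h]
      field_simp
      ring
  have hnat : ((T:ℝ) = l * (l + 1)) ↔ T = l * (l + 1) := by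
    constructor <;> intro h
    · exact_mod_cast h
    · rw [h]; push_cast; ring
  rw [harith, hnat, T_eq_iff C hd l hl]
  constructor
  · intro hP
    exact classify C hd (Finset.card_pos.1 (hl ▸ hl1)) hP
  · rintro (h | h)
    · exact star_pairwise C h
    · exact triangle_pairwise C h
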